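/- Let A, B be bounded operators on a complex Hilbert space with B normal and AB = λBA for a nonzero λ ∈ ℂ. Then BA* = λA*B and AB* = λ̄B*A. -/

import Mathlib

open NormedSpace

section FP

variable {𝔸 : Type*} [NormedRing 𝔸] [StarRing 𝔸] [CStarRing 𝔸] [NormedAlgebra ℂ 𝔸]
  [CompleteSpace 𝔸] [StarModule ℂ 𝔸]

lemma intertwine_pow {M N N' : 𝔸} (h : M * N = N' * M) (n : ℕ) :
    M * N ^ n = N' ^ n * M := by
  induction n with
  | zero => simp
  | succ k ih =>
    rw [pow_succ, ← mul_assoc, ih, pow_succ, mul_assoc, mul_assoc, h]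

lemma intertwine_exp {M N N' : 𝔸} (h : M * N = N' * M) (z : ℂ) :
    M * exp (z • N) = exp (z • N') * M := by
  simp only [exp_eq_tsum ℂ]
  rw [← (expSeries_summable' (𝕂 := ℂ) (z • N)).tsum_mul_left M,
      ← (expSeries_summable' (𝕂 := ℂ) (z • N')).tsum_mul_right M]
  congr 1
  ext n
  rw [mul_smul_comm, smul_mul_assoc, smul_pow, smul_pow, mul_smul_comm, smul_mul_assoc,
    intertwine_pow h n]

lemma fuglede_putnam {M N N' : 𝔸}
    (hN : star N * N = N * star N) (hN' : star N' * N' = N' * star N')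
    (h : M * N = N' * M) : M * star N = star N' * M := by
  let +nondep _ : NormedAlgebra ℚ 𝔸 := .restrictScalars ℚ ℂ 𝔸
  have cN : Commute (star N) N := by rw [Commute, SemiconjBy, hN]
  have cN' : Commute (star N') N' := by rw [Commute, SemiconjBy, hN']
  set f : ℂ → 𝔸 := fun z => exp (z • star N') * M * exp (-(z • star N)) with hf
  have key : ∀ z : ℂ, f z = exp (z • star N' - star z • N') * M *
      exp (star z • N - z • star N) := by
    intro z
    have h1 : M = exp (-(star z • N')) * M * exp (star z • N) := by
      rw [mul_assoc, intertwine_exp h (star z), ← mul_assoc, ← exp_add_of_commute]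
      · simp
      · exact (((Commute.refl N').smul_left (star z)).smul_right (star z)).neg_left
    calc f z = exp (z • star N') * (exp (-(star z • N')) * M * exp (star z • N)) *
        exp (-(z • star N)) := by rw [← h1]
      _ = (exp (z • star N') * exp (-(star z • N'))) * M *
          (exp (star z • N) * exp (-(z • star N))) := by
          simp only [mul_assoc]
      _ = exp (z • star N' - star z • N') * M * exp (star z • N - z • star N) := by
          rw [← exp_add_of_commute, ← exp_add_of_commute, ← sub_eq_add_neg, ← sub_eq_add_neg]
          · exact ((cN.symm.smul_left (star z)).smul_right z).neg_right
          · exact ((cN'.smul_left z).smul_right (star z)).neg_right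
  have hsA : ∀ z : ℂ, (z • star N' - star z • N') ∈ skewAdjoint 𝔸 := by
    intro z
    rw [skewAdjoint.mem_iff]
    rw [star_sub, star_smul, star_smul, star_star, star_star]
    abel
  have hsB : ∀ z : ℂ, (star z • N - z • star N) ∈ skewAdjoint 𝔸 := by
    intro z
    rw [skewAdjoint.mem_iff]
    rw [star_sub, star_smul, star_smul, star_star, star_star]
    abel
  have hbound : ∀ z : ℂ, ‖f z‖ = ‖M‖ := by
    intro z
    rw [key z]
    rw [CStarRing.norm_mul_mem_unitary _ (exp_mem_unitary_of_mem_skewAdjoint (hsB z)),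
        CStarRing.norm_mem_unitary_mul _ (exp_mem_unitary_of_mem_skewAdjoint (hsA z))]
  -- f is differentiable
  have hdiff : Differentiable ℂ f := by
    have d1 : Differentiable ℂ fun z : ℂ => exp (z • star N') :=
      fun z => (hasDerivAt_exp_smul_const (star N') z).differentiableAt
    have d2 : Differentiable ℂ fun z : ℂ => exp (-(z • star N)) := by
      simpa only [smul_neg, Differentiable] using fun z : ℂ =>
        (hasDerivAt_exp_smul_const (-star N) z).differentiableAt
    exact (d1.mul (differentiable_const M)).mul d2
  -- Liouville
  have hconst : ∀ z : ℂ, f z = f 0 := by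
    intro z
    apply hdiff.apply_eq_apply_of_bounded
    have hsub : Set.range f ⊆ Metric.closedBall 0 ‖M‖ := by
      rintro _ ⟨z, rfl⟩
      simp [Metric.mem_closedBall, hbound z]
    exact Metric.isBounded_closedBall.subset hsub
  have hf0 : f 0 = M := by simp [hf, exp_zero]
  -- so exp(z • star N') * M = M * exp(z • star N)
  have heq : ∀ z : ℂ, exp (z • star N') * M = M * exp (z • star N) := by
    intro z
    have := (hconst z).trans hf0
    simp only [hf] at this
    have h2 : exp (z • star N') * M * exp (-(z • star N)) * exp (z • star N) =
        M * exp (z • star N) := by rw [this]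
    rwa [mul_assoc, ← exp_add_of_commute
        ((((Commute.refl (star N)).smul_left z).smul_right z).neg_left),
      neg_add_cancel, exp_zero, mul_one] at h2
  -- differentiate at 0
  have hd1 : HasDerivAt (fun z : ℂ => exp (z • star N') * M) (star N' * M) 0 := by
    have := (hasDerivAt_exp_smul_const' (𝕂 := ℂ) (star N') 0).mul_const M
    simpa using this
  have hd2 : HasDerivAt (fun z : ℂ => M * exp (z • star N)) (M * star N) 0 := by
    have := (hasDerivAt_exp_smul_const' (𝕂 := ℂ) (star N) 0).const_mul M
    simpa using this
  have : star N' * M = M * star N := by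
    have h1 : HasDerivAt (fun z : ℂ => exp (z • star N') * M) (M * star N) 0 := by
      simp_rw [heq]; exact hd2
    exact hd1.unique h1
  exact this.symm

end FP

theorem lambda_commute_fuglede_putnam
    {H : Type*} [NormedAddCommGroup H] [InnerProductSpace ℂ H] [CompleteSpace H]
    (A B : H →L[ℂ] H) (lam : ℂ) (hlam : lam ≠ 0)
    (hB : ContinuousLinearMap.adjoint B * B = B * ContinuousLinearMap.adjoint B)
    (hcomm : A * B = lam • (B * A)) :
    B * ContinuousLinearMap.adjoint A = lam • (ContinuousLinearMap.adjoint A * B) ∧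
      A * ContinuousLinearMap.adjoint B =
        (starRingEnd ℂ lam) • (ContinuousLinearMap.adjoint B * A) := by
  rw [← ContinuousLinearMap.star_eq_adjoint, ← ContinuousLinearMap.star_eq_adjoint] at *
  have hB' : star B * B = B * star B := hB
  have hN' : star (lam • B) * (lam • B) = (lam • B) * star (lam • B) := by
    rw [star_smul, smul_mul_smul_comm, smul_mul_smul_comm, hB', mul_comm]
  have h : A * B = (lam • B) * A := by rw [hcomm, smul_mul_assoc]
  have key := fuglede_putnam hB' hN' h
  rw [star_smul] at key
  have h2 : A * star B = (starRingEnd ℂ lam) • (star B * A) := by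
    rw [key, smul_mul_assoc]; rfl
  refine ⟨?_, h2⟩
  have := congrArg star h2
  rw [star_mul, star_star, star_smul, star_mul, star_star, starRingEnd_apply, star_star] at this
  exact this
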